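/- Let G be a finite group with identity e and let {g_1, …, g_r} be a generating set of G of minimum cardinality. Then the set {(1,g_1,1), …, (1,g_{r-1},1), (1,g_r,2), (2,e,3), …, (n-1,e,n), (n,e,1)} of r + n - 1 elements is a generating set of minimum cardinality of the Brandt semigroup B(G,n), for n ≥ 2. -/

import Mathlib

/-- The Brandt semigroup `B(G, n)` over a group (or semigroup) `G`. -/
def BrandtSG (G : Type*) (n : ℕ) : Type _ := Option (Fin n × G × Fin n)

def BrandtSG.mul {G : Type*} [Mul G] {n : ℕ} : BrandtSG G n → BrandtSG G n → BrandtSG G n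
  | some (i, a, j), some (k, b, l) => if j = k then some (i, a * b, l) else none
  | _, _ => none

instance (G : Type*) [Mul G] (n : ℕ) : Mul (BrandtSG G n) := ⟨BrandtSG.mul⟩

instance (G : Type*) [Semigroup G] (n : ℕ) : Semigroup (BrandtSG G n) where
  mul_assoc a b c := by
    show BrandtSG.mul (BrandtSG.mul a b) c = BrandtSG.mul a (BrandtSG.mul b c)
    unfold BrandtSG at a b c
    rcases a with _ | ⟨i, a, j⟩ <;> rcases b with _ | ⟨k, b, l⟩ <;> rcases c with _ | ⟨p, c, q⟩
    all_goals delta BrandtSG.mul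
    all_goals dsimp only
    all_goals try (by_cases h1 : j = k)
    all_goals try (by_cases h2 : l = p)
    all_goals simp_all [mul_assoc]
    all_goals rfl

namespace BrandtAux

attribute [local instance] Classical.propDecidable

/-- element constructor -/
def el {G : Type*} {n : ℕ} (i : Fin n) (a : G) (j : Fin n) : BrandtSG G n := some (i, a, j)

lemma el_injl {G : Type*} {n : ℕ} {i a j i' a' j'} (h : (el i a j : BrandtSG G n) = el i' a' j') :
    i = i' ∧ a = a' ∧ j = j' := by
  unfold el at h
  have := Option.some.inj h
  exact ⟨congrArg Prod.fst this, congrArg (Prod.fst ∘ Prod.snd) this,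
    congrArg (Prod.snd ∘ Prod.snd) this⟩

lemma some_mul_some {G : Type*} [Mul G] {n : ℕ} (i k j : Fin n) (a b : G) :
    (el i a k : BrandtSG G n) * el k b j = el i (a * b) j := by
  show (if k = k then some (i, a * b, j) else none) = _
  exact if_pos rfl

lemma mul_eq_some {G : Type*} [Mul G] {n : ℕ} {x y : BrandtSG G n} {i : Fin n} {a : G}
    {j : Fin n} (h : x * y = el i a j) :
    ∃ b c k, x = el i b k ∧ y = el k c j ∧ a = b * c := by
  have h' : BrandtSG.mul x y = some (i, a, j) := h
  rcases x with _ | ⟨i1, b, j1⟩ <;> rcases y with _ | ⟨i2, c, j2⟩ <;>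
    try exact absurd (show (none : Option (Fin n × G × Fin n)) = some (i, a, j) from h') (fun h0 => Option.some_ne_none _ h0.symm)
  · rw [show BrandtSG.mul (some (i1, b, j1)) (some (i2, c, j2)) =
        (if j1 = i2 then some (i1, b * c, j2) else none) from rfl] at h'
    split_ifs at h' with he
    · subst he
      obtain ⟨h1, h2, h3⟩ := el_injl (show (el i1 (b * c) j2 : BrandtSG G n) = el i a j from h')
      refine ⟨b, c, j1, ?_, ?_, ?_⟩
      · rw [← h1]; rfl
      · rw [← h3]; rfl
      · exact h2.symm

variable {G : Type*} [Group G] {n : ℕ} [NeZero n]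

/-- walks of length `k` from `u` to `v` along edges of `U` -/
def Wk (U : Set (BrandtSG G n)) : ℕ → Fin n → Fin n → Prop
  | 0, u, v => u = v
  | (k+1), u, v => ∃ w a, Wk U k u w ∧ el w a v ∈ U

lemma Wk.comp {U : Set (BrandtSG G n)} {k l : ℕ} {u w v : Fin n}
    (h1 : Wk U k u w) (h2 : Wk U l w v) : Wk U (k + l) u v := by
  induction l generalizing v with
  | zero => rw [show w = v from h2] at h1; exact h1
  | succ l ih =>
    obtain ⟨w', a, hw', he⟩ := h2
    exact ⟨w', a, ih hw', he⟩

noncomputable def dpt (U : Set (BrandtSG G n)) (v : Fin n) : ℕ :=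
  if h : ∃ k, Wk U k 0 v then Nat.find h else 0

lemma dpt_zero (U : Set (BrandtSG G n)) : dpt U (0 : Fin n) = 0 := by
  unfold dpt
  rw [dif_pos ⟨0, rfl⟩]
  exact (Nat.find_eq_zero _).mpr rfl

lemma exists_parent {U : Set (BrandtSG G n)} {v : Fin n} (hv : v ≠ 0)
    (hrv : ∃ k, Wk U k 0 v) :
    ∃ p : Fin n × G, el p.1 p.2 v ∈ U ∧ dpt U p.1 < dpt U v := by
  have hd : dpt U v = Nat.find hrv := dif_pos hrv
  have hspec := Nat.find_spec hrv
  rcases hk : Nat.find hrv with _ | k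
  · rw [hk] at hspec; exact absurd hspec.symm hv
  · rw [hk] at hspec
    obtain ⟨w, a, hw, he⟩ := hspec
    refine ⟨(w, a), he, ?_⟩
    have hdw : dpt U w ≤ k := by
      unfold dpt
      rw [dif_pos ⟨k, hw⟩]
      exact Nat.find_le hw
    show dpt U w < dpt U v
    omega

noncomputable def pedge (U : Set (BrandtSG G n)) (v : Fin n) : Fin n × G :=
  if h : ∃ p : Fin n × G, el p.1 p.2 v ∈ U ∧ dpt U p.1 < dpt U v then h.choose else (0, 1)

lemma pedge_fst_lt {U : Set (BrandtSG G n)} {v : Fin n} (hdv : dpt U v ≠ 0) :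
    dpt U (pedge U v).1 < dpt U v := by
  unfold pedge
  split
  · next h => exact h.choose_spec.2
  · rw [dpt_zero]; omega

noncomputable def rho (U : Set (BrandtSG G n)) (v : Fin n) : G :=
  if h : dpt U v = 0 then 1 else rho U (pedge U v).1 * (pedge U v).2
termination_by dpt U v
decreasing_by exact pedge_fst_lt h

lemma rho_zero (U : Set (BrandtSG G n)) : rho U (0 : Fin n) = 1 := by
  rw [rho, dif_pos (dpt_zero U)]

lemma dpt_ne_zero {U : Set (BrandtSG G n)} {v : Fin n} (hv : v ≠ 0)
    (hrv : ∃ k, Wk U k 0 v) : dpt U v ≠ 0 := by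
  intro h0
  have hd : dpt U v = Nat.find hrv := dif_pos hrv
  rw [hd] at h0
  have := Nat.find_spec hrv
  rw [h0] at this
  exact hv this.symm

lemma pedge_spec {U : Set (BrandtSG G n)} {v : Fin n} (hv : v ≠ 0)
    (hrv : ∃ k, Wk U k 0 v) :
    el (pedge U v).1 (pedge U v).2 v ∈ U ∧
      rho U v = rho U (pedge U v).1 * (pedge U v).2 := by
  have hex := exists_parent hv hrv
  constructor
  · show el (pedge U v).1 (pedge U v).2 v ∈ U
    unfold pedge
    rw [dif_pos hex]
    exact hex.choose_spec.1
  · rw [rho, dif_neg (dpt_ne_zero hv hrv)]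

/-- value of an element under the rebasing map -/
noncomputable def fval (U : Set (BrandtSG G n)) : BrandtSG G n → G
  | some (i, a, j) => rho U i * a * (rho U j)⁻¹
  | none => 1

lemma fval_el (U : Set (BrandtSG G n)) (i : Fin n) (a : G) (j : Fin n) :
    fval U (el i a j) = rho U i * a * (rho U j)⁻¹ := rfl

theorem lower_bound {G : Type*} [Group G] [Fintype G] {n r : ℕ} [NeZero n]
    (hn : 2 ≤ n) (hmin : ∀ X : Set G, Subgroup.closure X = ⊤ → r ≤ X.ncard)
    (U : Set (BrandtSG G n)) (hU : Subsemigroup.closure U = ⊤) :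
    r + n - 1 ≤ U.ncard := by
  have hBfin : Finite (BrandtSG G n) := inferInstanceAs (Finite (Option (Fin n × G × Fin n)))
  have memtop : ∀ z : BrandtSG G n, z ∈ Subsemigroup.closure U := by
    intro z; rw [hU]; trivial
  -- every generated `some` element gives a walk
  have hwalk : ∀ z : BrandtSG G n, z ∈ Subsemigroup.closure U →
      ∀ (i : Fin n) (a : G) (j : Fin n), z = el i a j → ∃ k, Wk U k i j := by
    intro z hz
    induction hz using Subsemigroup.closure_induction with
    | mem x hx =>
      intro i a j hij
      exact ⟨0 + 1, i, a, rfl, hij ▸ hx⟩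
    | mul x y hx hy ihx ihy =>
      intro i a j hij
      obtain ⟨b, c, k, hxe, hye, rfl⟩ := mul_eq_some hij
      obtain ⟨k1, hk1⟩ := ihx i b k hxe
      obtain ⟨k2, hk2⟩ := ihy k c j hye
      exact ⟨k1 + k2, hk1.comp hk2⟩
  have hreach : ∀ v : Fin n, ∃ k, Wk U k 0 v := fun v =>
    hwalk _ (memtop (el 0 1 v)) 0 1 v rfl
  -- tree edges
  set T : Set (BrandtSG G n) :=
    {z | ∃ v : Fin n, v ≠ 0 ∧ z = el (pedge U v).1 (pedge U v).2 v} with hT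
  have hTU : T ⊆ U := by
    rintro z ⟨v, hv, rfl⟩
    exact (pedge_spec hv (hreach v)).1
  set X : Set G := fval U '' (U \ T) with hX
  -- closure of X is everything
  have hHmem : ∀ z : BrandtSG G n, z ∈ Subsemigroup.closure U →
      ∀ (i : Fin n) (a : G) (j : Fin n), z = el i a j →
        rho U i * a * (rho U j)⁻¹ ∈ Subgroup.closure X := by
    intro z hz
    induction hz using Subsemigroup.closure_induction with
    | mem x hx =>
      intro i a j hij
      by_cases hxT : x ∈ T
      · obtain ⟨v, hv, he⟩ := hxT
        rw [hij] at he
        obtain ⟨h1, h2, h3⟩ := el_injl he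
        subst h1; subst h2; subst h3
        rw [← (pedge_spec hv (hreach j)).2, mul_inv_cancel]
        exact Subgroup.one_mem _
      · apply Subgroup.subset_closure
        exact ⟨x, ⟨hx, hxT⟩, by rw [hij, fval_el]⟩
    | mul x y hx hy ihx ihy =>
      intro i a j hij
      obtain ⟨b, c, k, hxe, hye, rfl⟩ := mul_eq_some hij
      have := mul_mem (ihx i b k hxe) (ihy k c j hye)
      convert this using 1
      group
  have hXtop : Subgroup.closure X = ⊤ := by
    rw [eq_top_iff]
    intro x _
    have := hHmem _ (memtop (el 0 x 0)) 0 x 0 rfl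
    rwa [rho_zero, one_mul, inv_one, mul_one] at this
  -- counting
  have hTcard : T.ncard = n - 1 := by
    have him : T = (fun v : Fin n => el (pedge U v).1 (pedge U v).2 v) ''
        {v : Fin n | v ≠ 0} := by
      ext z
      constructor
      · rintro ⟨v, hv, rfl⟩; exact ⟨v, hv, rfl⟩
      · rintro ⟨v, hv, rfl⟩; exact ⟨v, hv, rfl⟩
    rw [him, Set.ncard_image_of_injOn, show {v : Fin n | v ≠ 0} = Set.univ \ {0} by
        ext v; simp, Set.ncard_diff (by simp), Set.ncard_univ, Set.ncard_singleton,
        Nat.card_eq_fintype_card, Fintype.card_fin]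
    intro v _ w _ h
    exact (el_injl h).2.2
  have hXcard : r ≤ X.ncard := hmin X hXtop
  have h1 : X.ncard ≤ (U \ T).ncard := Set.ncard_image_le (Set.toFinite _)
  have h2 : (U \ T).ncard = U.ncard - T.ncard := Set.ncard_diff hTU (Set.toFinite _)
  have h3 : T.ncard ≤ U.ncard := Set.ncard_le_ncard hTU (Set.toFinite _)
  omega

lemma fin_val_one {n : ℕ} [NeZero n] (hn : 2 ≤ n) : ((1 : Fin n) : ℕ) = 1 := by
  rw [Fin.val_one']
  exact Nat.mod_eq_of_lt hn

lemma fin_one_ne_zero {n : ℕ} [NeZero n] (hn : 2 ≤ n) : (1 : Fin n) ≠ 0 := by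
  intro h
  have := congrArg Fin.val h
  rw [fin_val_one hn, Fin.val_zero] at this
  exact one_ne_zero this

lemma fin_val_nz {n : ℕ} [NeZero n] {i : Fin n} (hi : i ≠ 0) : (i : ℕ) ≠ 0 := by
  intro h
  exact hi (Fin.ext (by rw [h, Fin.val_zero]))

lemma chain_mem {G : Type*} [Monoid G] {n : ℕ} [NeZero n] (hn : 2 ≤ n)
    (S : Subsemigroup (BrandtSG G n))
    (hc : ∀ i : Fin n, i ≠ 0 → el i (1 : G) (i + 1) ∈ S) :
    ∀ i : Fin n, i ≠ 0 → el i (1 : G) 0 ∈ S := by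
  have key : ∀ k, ∀ i : Fin n, i ≠ 0 → n - 1 - (i : ℕ) = k → el i (1 : G) 0 ∈ S := by
    intro k
    induction k with
    | zero =>
      intro i hi hk
      have hlt := i.isLt
      have hival : (i : ℕ) = n - 1 := by omega
      have hadd : i + 1 = 0 := by
        apply Fin.ext
        rw [Fin.val_add, fin_val_one hn, Fin.val_zero, hival]
        rw [Nat.sub_add_cancel (by omega)]
        exact Nat.mod_self n
      have := hc i hi
      rwa [hadd] at this
    | succ k ih =>
      intro i hi hk
      have hlt := i.isLt
      have hnz := fin_val_nz hi
      have hadd : ((i + 1 : Fin n) : ℕ) = (i : ℕ) + 1 := by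
        rw [Fin.val_add, fin_val_one hn]
        exact Nat.mod_eq_of_lt (by omega)
      have h1ne : i + 1 ≠ 0 := fun h => by
        have := congrArg Fin.val h
        rw [hadd, Fin.val_zero] at this
        omega
      have hmem := S.mul_mem (hc i hi) (ih (i + 1) h1ne (by omega))
      rwa [some_mul_some, one_mul] at hmem
  intro i hi
  exact key (n - 1 - (i : ℕ)) i hi rfl

lemma fwd_mem {G : Type*} [Monoid G] {n : ℕ} [NeZero n] (hn : 2 ≤ n)
    (S : Subsemigroup (BrandtSG G n))
    (hc : ∀ i : Fin n, i ≠ 0 → el i (1 : G) (i + 1) ∈ S) (x : G)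
    (hx : el (0 : Fin n) x 1 ∈ S) :
    ∀ j : Fin n, j ≠ 0 → el (0 : Fin n) x j ∈ S := by
  have key : ∀ m, ∀ j : Fin n, (j : ℕ) = m → j ≠ 0 → el (0 : Fin n) x j ∈ S := by
    intro m
    induction m with
    | zero => intro j hj hj0; exact absurd (Fin.ext (by rw [hj, Fin.val_zero])) hj0
    | succ m ih =>
      intro j hj hj0
      rcases Nat.eq_zero_or_pos m with hm | hm
      · subst hm
        have : j = 1 := Fin.ext (by rw [hj, fin_val_one hn])
        rwa [this]
      · have hlt := j.isLt
        set j' : Fin n := ⟨m, by omega⟩ with hj'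
        have hj'0 : j' ≠ 0 := fun h => by
          have := congrArg Fin.val h
          simp only [hj', Fin.val_zero] at this
          omega
        have hmem := ih j' rfl hj'0
        have hadd : j' + 1 = j := by
          apply Fin.ext
          rw [Fin.val_add, fin_val_one hn]
          show (m + 1) % n = (j : ℕ)
          rw [Nat.mod_eq_of_lt (by omega)]
          omega
        have := S.mul_mem hmem (hc j' hj'0)
        rwa [hadd, some_mul_some, mul_one] at this
  intro j hj
  exact key (j : ℕ) j rfl hj

lemma group_saturate {G : Type*} [Group G] [Fintype G] {r : ℕ} (hr : 1 ≤ r)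
    (g : Fin r → G) (hgen : Subgroup.closure (Set.range g) = ⊤)
    (K : Set G) (hmul : ∀ a ∈ K, ∀ b ∈ K, a * b ∈ K) (hg : ∀ i, g i ∈ K) :
    ∀ x, x ∈ K := by
  have hpow : ∀ a ∈ K, ∀ k : ℕ, a ^ (k + 1) ∈ K := by
    intro a ha k
    induction k with
    | zero => rwa [pow_one]
    | succ k ih => rw [pow_succ]; exact hmul _ ih _ ha
  have hone : (1 : G) ∈ K := by
    have ha := hg ⟨0, hr⟩
    set a := g ⟨0, hr⟩
    have hpos : 0 < orderOf a := orderOf_pos a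
    have := hpow a ha (orderOf a - 1)
    rwa [Nat.sub_add_cancel hpos, pow_orderOf_eq_one] at this
  have hinv : ∀ a ∈ K, a⁻¹ ∈ K := by
    intro a ha
    rcases eq_or_ne (orderOf a) 1 with h1 | h1
    · rw [orderOf_eq_one_iff.mp h1, inv_one]; exact hone
    · have hpos : 0 < orderOf a := orderOf_pos a
      have h2 : 2 ≤ orderOf a := by omega
      have : a⁻¹ = a ^ (orderOf a - 1) := by
        apply inv_eq_of_mul_eq_one_right
        rw [← pow_succ', Nat.sub_add_cancel hpos]
        exact pow_orderOf_eq_one a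
      rw [this, show orderOf a - 1 = (orderOf a - 2) + 1 by omega]
      exact hpow a ha _
  let K' : Subgroup G :=
    { carrier := K
      mul_mem' := fun ha hb => hmul _ ha _ hb
      one_mem' := hone
      inv_mem' := fun ha => hinv _ ha }
  have hle : Subgroup.closure (Set.range g) ≤ K' := by
    apply (Subgroup.closure_le _).mpr
    rintro x ⟨i, rfl⟩
    exact hg i
  rw [hgen] at hle
  exact fun x => hle trivial

end BrandtAux

theorem brandt_min_generating_set (G : Type*) [Group G] [Fintype G] (n r : ℕ) [NeZero n]
    (hn : 2 ≤ n) (hr : 1 ≤ r) (g : Fin r → G) (hinj : Function.Injective g)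
    (hgen : Subgroup.closure (Set.range g) = ⊤)
    (hmin : ∀ X : Set G, Subgroup.closure X = ⊤ → r ≤ X.ncard) :
    let P : Set (BrandtSG G n) :=
      {x | ∃ i : Fin r, (i : ℕ) < r - 1 ∧ x = some (0, g i, 0)} ∪
      {some (0, g ⟨r - 1, by omega⟩, 1)} ∪
      {x | ∃ i : Fin n, i ≠ 0 ∧ x = some (i, 1, i + 1)}
    P.ncard = r + n - 1 ∧ Subsemigroup.closure P = ⊤ ∧
      ∀ U : Set (BrandtSG G n), Subsemigroup.closure U = ⊤ → r + n - 1 ≤ U.ncard := by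
  intro P
  have hBfin : Finite (BrandtSG G n) := inferInstanceAs (Finite (Option (Fin n × G × Fin n)))
  have h1n0 : (1 : Fin n) ≠ 0 := BrandtAux.fin_one_ne_zero hn
  refine ⟨?_, ?_, fun U hU => BrandtAux.lower_bound hn hmin U hU⟩
  · -- cardinality
    have hA : {x : BrandtSG G n | ∃ i : Fin r, (i : ℕ) < r - 1 ∧ x = some (0, g i, 0)} =
        (fun i : Fin r => (BrandtAux.el 0 (g i) 0 : BrandtSG G n)) ''
          {i : Fin r | (i : ℕ) < r - 1} := by
      ext x
      constructor
      · rintro ⟨i, h, rfl⟩; exact ⟨i, h, rfl⟩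
      · rintro ⟨i, h, rfl⟩; exact ⟨i, h, rfl⟩
    have hC : {x : BrandtSG G n | ∃ i : Fin n, i ≠ 0 ∧ x = some (i, 1, i + 1)} =
        (fun i : Fin n => (BrandtAux.el i (1 : G) (i + 1) : BrandtSG G n)) ''
          {i : Fin n | i ≠ 0} := by
      ext x
      constructor
      · rintro ⟨i, h, rfl⟩; exact ⟨i, h, rfl⟩
      · rintro ⟨i, h, rfl⟩; exact ⟨i, h, rfl⟩
    have hcardA : {x : BrandtSG G n | ∃ i : Fin r, (i : ℕ) < r - 1 ∧
        x = some (0, g i, 0)}.ncard = r - 1 := by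
      rw [hA, Set.ncard_image_of_injective _ (fun i j h => hinj (BrandtAux.el_injl h).2.1)]
      have : {i : Fin r | (i : ℕ) < r - 1} =
          Set.range (Fin.castLE (show r - 1 ≤ r by omega)) := by
        ext i
        constructor
        · intro h; exact ⟨⟨i, h⟩, rfl⟩
        · rintro ⟨j, rfl⟩; exact j.isLt
      rw [this, ← Set.image_univ,
        Set.ncard_image_of_injective _ (Fin.castLE_injective _),
        Set.ncard_univ, Nat.card_eq_fintype_card, Fintype.card_fin]
    have hcardC : {x : BrandtSG G n | ∃ i : Fin n, i ≠ 0 ∧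
        x = some (i, 1, i + 1)}.ncard = n - 1 := by
      rw [hC, Set.ncard_image_of_injective _ (fun i j h => (BrandtAux.el_injl h).1)]
      rw [show {i : Fin n | i ≠ 0} = Set.univ \ {0} by ext v; simp,
        Set.ncard_diff (by simp), Set.ncard_univ, Set.ncard_singleton,
        Nat.card_eq_fintype_card, Fintype.card_fin]
    have hd1 : Disjoint {x : BrandtSG G n | ∃ i : Fin r, (i : ℕ) < r - 1 ∧
        x = some (0, g i, 0)} {some (0, g ⟨r - 1, by omega⟩, 1)} := by
      rw [Set.disjoint_left]
      rintro x ⟨i, hi, rfl⟩ hxB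
      have : (BrandtAux.el 0 (g i) 0 : BrandtSG G n) =
        BrandtAux.el 0 (g ⟨r - 1, by omega⟩) 1 := hxB
      exact h1n0 ((BrandtAux.el_injl this).2.2).symm
    have hd2 : Disjoint ({x : BrandtSG G n | ∃ i : Fin r, (i : ℕ) < r - 1 ∧
        x = some (0, g i, 0)} ∪ {some (0, g ⟨r - 1, by omega⟩, 1)})
        {x : BrandtSG G n | ∃ i : Fin n, i ≠ 0 ∧ x = some (i, 1, i + 1)} := by
      rw [Set.disjoint_left]
      rintro x hx ⟨k, hk, rfl⟩
      rcases hx with ⟨i, hi, he⟩ | he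
      · exact hk ((BrandtAux.el_injl
          (show (BrandtAux.el k (1:G) (k+1) : BrandtSG G n) = BrandtAux.el 0 (g i) 0
            from he)).1)
      · exact hk ((BrandtAux.el_injl
          (show (BrandtAux.el k (1:G) (k+1) : BrandtSG G n) =
            BrandtAux.el 0 (g ⟨r - 1, by omega⟩) 1 from he)).1)
    have hs1 : ({some (0, g ⟨r - 1, by omega⟩, 1)} : Set (BrandtSG G n)).ncard = 1 :=
      Set.ncard_singleton _
    show ({x : BrandtSG G n | ∃ i : Fin r, (i : ℕ) < r - 1 ∧ x = some (0, g i, 0)} ∪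
      {some (0, g ⟨r - 1, by omega⟩, 1)} ∪
      {x : BrandtSG G n | ∃ i : Fin n, i ≠ 0 ∧ x = some (i, 1, i + 1)}).ncard = r + n - 1
    rw [Set.ncard_union_eq hd2 (Set.toFinite _) (Set.toFinite _),
      Set.ncard_union_eq hd1 (Set.toFinite _) (Set.toFinite _),
      hcardA, hcardC, hs1]
    omega
  · -- generation
    rw [Subsemigroup.eq_top_iff']
    set S := Subsemigroup.closure P with hSdef
    have hc : ∀ i : Fin n, i ≠ 0 → BrandtAux.el i (1 : G) (i + 1) ∈ S :=
      fun i hi => Subsemigroup.subset_closure (Or.inr ⟨i, hi, rfl⟩)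
    have hb : BrandtAux.el (0 : Fin n) (g ⟨r - 1, by omega⟩) 1 ∈ S :=
      Subsemigroup.subset_closure (Or.inl (Or.inr rfl))
    have hchain := BrandtAux.chain_mem hn S hc
    have key0 : BrandtAux.el (0 : Fin n) (g ⟨r - 1, by omega⟩) 0 ∈ S := by
      have := S.mul_mem hb (hchain 1 h1n0)
      rwa [BrandtAux.some_mul_some, mul_one] at this
    have hgens : ∀ i : Fin r, BrandtAux.el (0 : Fin n) (g i) 0 ∈ S := by
      intro i
      rcases lt_or_ge (i : ℕ) (r - 1) with h | h
      · exact Subsemigroup.subset_closure (Or.inl (Or.inl ⟨i, h, rfl⟩))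
      · have hie : i = ⟨r - 1, by omega⟩ := Fin.ext (by have := i.isLt; simp; omega)
        rw [hie]; exact key0
    have hdiag : ∀ x : G, BrandtAux.el (0 : Fin n) x 0 ∈ S :=
      BrandtAux.group_saturate hr g hgen {x : G | BrandtAux.el (0 : Fin n) x 0 ∈ S}
        (fun a ha b hb' => by
          have := S.mul_mem ha hb'
          rwa [BrandtAux.some_mul_some] at this) hgens
    have hrow : ∀ (x : G) (j : Fin n), BrandtAux.el (0 : Fin n) x j ∈ S := by
      intro x j
      by_cases hj : j = 0
      · subst hj; exact hdiag x
      · have h01 := hdiag (x * (g ⟨r - 1, by omega⟩)⁻¹)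
        have hx1 := S.mul_mem h01 hb
        rw [BrandtAux.some_mul_some, inv_mul_cancel_right] at hx1
        exact BrandtAux.fwd_mem hn S hc x hx1 j hj
    intro z
    rcases z with _ | ⟨i, x, j⟩
    · have h2 := S.mul_mem hb hb
      have heq : (BrandtAux.el (0 : Fin n) (g ⟨r - 1, by omega⟩) 1 : BrandtSG G n) *
          BrandtAux.el (0 : Fin n) (g ⟨r - 1, by omega⟩) 1 = none := by
        show (if (1 : Fin n) = 0 then some ((0 : Fin n), g ⟨r - 1, by omega⟩ * g ⟨r - 1, by omega⟩, (1 : Fin n)) else none) = _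
        exact if_neg h1n0
      rwa [heq] at h2
    · by_cases hi : i = 0
      · subst hi; exact hrow x j
      · have := S.mul_mem (hchain i hi) (hrow x j)
        rwa [BrandtAux.some_mul_some, one_mul] at this
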